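/- Let a < b < c < d < e < f be real numbers, and consider the three circles with diameters [a,d], [b,e], and [c,f] on the real axis. If there exists a point z of the open upper half-plane (Im z > 0) lying on all three circles, then (b-a)*(d-c)*(f-e) = (f-a)*(c-b)*(e-d). -/

import Mathlib

/-- `z` lies on the circle in the plane with diameter the segment `[p, q]` of the real
axis, i.e. the circle with center `(p+q)/2` and radius `(q-p)/2`. -/
def onDiamCircle (p q : ℝ) (z : ℂ) : Prop :=
  ‖z - (((p + q) / 2 : ℝ) : ℂ)‖ = (q - p) / 2

lemma diam_real (p q : ℝ) (z : ℂ) (h : onDiamCircle p q z) :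
    (z.re - (p + q) / 2) ^ 2 + z.im ^ 2 = ((q - p) / 2) ^ 2 := by
  have h' : Complex.normSq (z - (((p + q) / 2 : ℝ) : ℂ)) = ((q - p) / 2) ^ 2 := by
    rw [← Complex.sq_norm, h]
  simpa [Complex.normSq_apply, Complex.sub_re, Complex.sub_im, sq] using h'

/-- **Concurrency of three geodesics (Lemma 3 of Appendix A).**
Let `a < b < c < d < e < f` be real numbers.  If some point `z` of the open upper
half-plane lies on all three circles with diameters `[a,d]`, `[b,e]` and `[c,f]`,
then `(b-a)*(d-c)*(f-e) = (f-a)*(c-b)*(e-d)`. -/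
theorem concurrent_geodesics (a b c d e f : ℝ)
    (hab : a < b) (hbc : b < c) (hcd : c < d) (hde : d < e) (hef : e < f)
    (z : ℂ) (hz : 0 < z.im)
    (h1 : onDiamCircle a d z) (h2 : onDiamCircle b e z) (h3 : onDiamCircle c f z) :
    (b - a) * (d - c) * (f - e) = (f - a) * (c - b) * (e - d) := by
  have e1 := diam_real a d z h1
  have e2 := diam_real b e z h2
  have e3 := diam_real c f z h3
  linear_combination (b + e - c - f) * (e1 - e2) - (a + d - b - e) * (e2 - e3)
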